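/- Every interval in the Tamari lattice admits a unique maximal decomposition I = I_1 / I_2 / ... / I_k into intervals, where the product of intervals is defined componentwise on minima and maxima via the left-grafting operation /; moreover an interval is indecomposable if and only if its minimum is an indecomposable tree. -/

import Mathlib

/-- Planar binary trees, counted by internal nodes. -/
inductive PBT where
  | leaf : PBT
  | node : PBT → PBT → PBT
deriving DecidableEq

namespace PBT

/-- Number of internal nodes. -/
def size : PBT → ℕ
  | leaf => 0
  | node l r => size l + size r + 1

/-- One rotation step, going up in the Tamari order: a right comb
configuration `a·(b·c)` is replaced by a left comb configuration `(a·b)·c`,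
possibly deep inside the tree. -/
inductive Rot : PBT → PBT → Prop
  | rotate (a b c : PBT) : Rot (node a (node b c)) (node (node a b) c)
  | left {l l' : PBT} (r : PBT) : Rot l l' → Rot (node l r) (node l' r)
  | right (l : PBT) {r r' : PBT} : Rot r r' → Rot (node l r) (node l r')

/-- The Tamari order: the reflexive-transitive closure of rotation. -/
def le (S T : PBT) : Prop := Relation.ReflTransGen Rot S T

/-- The unique tree with one internal node. -/
def Y : PBT := node leaf leaf

/-- `S / T`: graft the root of `S` onto the leftmost leaf of `T`. -/
def graftL : PBT → PBT → PBT
  | S, leaf => S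
  | S, node l r => node (graftL S l) r

/-- `T₁ / T₂ / ⋯ / T_k` for a list of trees (the empty graft is the trivial tree). -/
def listGraft (L : List PBT) : PBT := L.foldr graftL leaf

/-- A (nontrivial) tree is indecomposable if it is not of the form `S / T`
with `S`, `T` both nontrivial. -/
def Indec (T : PBT) : Prop :=
  T ≠ leaf ∧ ¬ ∃ S U : PBT, S ≠ leaf ∧ U ≠ leaf ∧ graftL S U = T

end PBT

/-- A pair `(S,T)` is a Tamari interval when `S ≤ T`. -/
def isItv (p : PBT × PBT) : Prop := PBT.le p.1 p.2

/-- Grafting of intervals, componentwise on minima and maxima: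
`J/K = [min J / min K, max J / max K]`. -/
def igraft (p q : PBT × PBT) : PBT × PBT := (PBT.graftL p.1 q.1, PBT.graftL p.2 q.2)

/-- `I₁ / I₂ / ⋯ / I_k` for a list of intervals. -/
def ilistGraft (L : List (PBT × PBT)) : PBT × PBT := L.foldr igraft (PBT.leaf, PBT.leaf)

/-- An interval is indecomposable if it is nontrivial and is not the graft `J/K`
of two nontrivial intervals. -/
def IndecItv (p : PBT × PBT) : Prop :=
  isItv p ∧ p.1 ≠ PBT.leaf ∧
    ¬ ∃ q r : PBT × PBT, isItv q ∧ isItv r ∧ q.1 ≠ PBT.leaf ∧ r.1 ≠ PBT.leaf ∧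
      igraft q r = p
namespace PBT

lemma leaf_graftL (T : PBT) : graftL leaf T = T := by
  induction T with
  | leaf => rfl
  | node l r ih => simp [graftL, ih]

lemma size_graftL (S T : PBT) : size (graftL S T) = size S + size T := by
  induction T with
  | leaf => simp [graftL, size]
  | node l r ih => simp [graftL, size, ih]; omega

lemma size_pos {T : PBT} (h : T ≠ leaf) : 0 < size T := by
  cases T with
  | leaf => exact absurd rfl h
  | node l r => simp [size]

lemma eq_leaf_of_size {T : PBT} (h : size T = 0) : T = leaf := by
  cases T with
  | leaf => rfl
  | node l r => simp [size] at h

lemma rot_size {S T : PBT} (h : Rot S T) : size S = size T := by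
  induction h with
  | rotate a b c => simp [size]; omega
  | left r _ ih => simp [size, ih]
  | right l _ ih => simp [size, ih]

lemma le_size {S T : PBT} (h : le S T) : size S = size T := by
  induction h with
  | refl => rfl
  | tail _ h ih => exact ih.trans (rot_size h)

lemma le_node_left {l l' : PBT} (r : PBT) (h : le l l') : le (node l r) (node l' r) :=
  Relation.ReflTransGen.lift (fun x => node x r) (fun _ _ h => Rot.left r h) _ _ h

lemma graftL_assoc (a b c : PBT) : graftL (graftL a b) c = graftL a (graftL b c) := by
  induction c with
  | leaf => rfl
  | node l r ih => simp [graftL, ih]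

lemma rot_graft : ∀ (B A X : PBT), Rot (graftL A B) X →
    ∃ A' B', X = graftL A' B' ∧ le A A' ∧ le B B' ∧ size A' = size A ∧ size B' = size B := by
  intro B
  induction B with
  | leaf =>
    intro A X h
    exact ⟨X, leaf, rfl, Relation.ReflTransGen.single h, Relation.ReflTransGen.refl,
      (rot_size h).symm, rfl⟩
  | node l r ih =>
    intro A X h
    rw [show graftL A (node l r) = node (graftL A l) r from rfl] at h
    cases h with
    | rotate a b c =>
      refine ⟨A, node (node l b) c, rfl, Relation.ReflTransGen.refl,
        Relation.ReflTransGen.single (Rot.rotate l b c), rfl, by simp [size]; omega⟩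
    | left _ h' =>
      obtain ⟨A', l₂, rfl, hA, hl, sA, sl⟩ := ih A _ h'
      exact ⟨A', node l₂ r, rfl, hA, le_node_left r hl, sA, by simp [size, sl]⟩
    | right _ h' =>
      exact ⟨A, node l _, rfl, Relation.ReflTransGen.refl,
        Relation.ReflTransGen.single (Rot.right l h'), rfl, by simp [size, rot_size h']⟩

lemma le_graft {A B X : PBT} (h : le (graftL A B) X) :
    ∃ A' B', X = graftL A' B' ∧ le A A' ∧ le B B' ∧ size A' = size A ∧ size B' = size B := by
  induction h with
  | refl => exact ⟨A, B, rfl, Relation.ReflTransGen.refl, Relation.ReflTransGen.refl, rfl, rfl⟩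
  | tail _ h2 ih =>
    obtain ⟨A', B', rfl, hA, hB, sA, sB⟩ := ih
    obtain ⟨A'', B'', rfl, hA', hB', sA', sB'⟩ := rot_graft _ _ _ h2
    exact ⟨A'', B'', rfl, hA.trans hA', hB.trans hB', sA'.trans sA, sB'.trans sB⟩

lemma graft_inj : ∀ (B B' A A' : PBT), size A = size A' → graftL A B = graftL A' B' →
    A = A' ∧ B = B' := by
  intro B
  induction B with
  | leaf =>
    intro B' A A' hs he
    cases B' with
    | leaf => exact ⟨he, rfl⟩
    | node l r =>
      exfalso
      have h2 : size (graftL A leaf) = size (graftL A' (node l r)) := by rw [he]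
      simp [size_graftL, size] at h2
      omega
  | node l r ihl =>
    intro B' A A' hs he
    cases B' with
    | leaf =>
      exfalso
      have h2 : size (graftL A (node l r)) = size (graftL A' leaf) := by rw [he]
      simp [size_graftL, size] at h2
      omega
    | node l' r' =>
      rw [show graftL A (node l r) = node (graftL A l) r from rfl,
        show graftL A' (node l' r') = node (graftL A' l') r' from rfl] at he
      injection he with h1 h2
      obtain ⟨hA, hl⟩ := ihl l' A A' hs h1
      exact ⟨hA, by rw [hl, h2]⟩

lemma indec_node_leaf (r : PBT) : Indec (node leaf r) := by
  refine ⟨by simp, ?_⟩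
  rintro ⟨S, U, hS, hU, hE⟩
  cases U with
  | leaf => exact hU rfl
  | node l u =>
    rw [show graftL S (node l u) = node (graftL S l) u from rfl] at hE
    injection hE with h1 h2
    cases l with
    | leaf => exact hS h1
    | node a b => simp [graftL] at h1

lemma indec_iff (T : PBT) : Indec T ↔ ∃ r, T = node leaf r := by
  constructor
  · rintro ⟨hne, hdec⟩
    cases T with
    | leaf => exact absurd rfl hne
    | node l r =>
      cases l with
      | leaf => exact ⟨r, rfl⟩
      | node a b =>
        exact absurd ⟨node a b, node leaf r, by simp, by simp, rfl⟩ hdec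
  · rintro ⟨r, rfl⟩
    exact indec_node_leaf r

end PBT

lemma igraft_leaf (p : PBT × PBT) : igraft p (PBT.leaf, PBT.leaf) = p := by
  cases p; rfl

lemma leaf_igraft (p : PBT × PBT) : igraft (PBT.leaf, PBT.leaf) p = p := by
  cases p; simp [igraft, PBT.leaf_graftL]

lemma igraft_assoc (a b c : PBT × PBT) : igraft (igraft a b) c = igraft a (igraft b c) := by
  simp [igraft, PBT.graftL_assoc]

lemma ilistGraft_append (L : List (PBT × PBT)) (q : PBT × PBT) :
    ilistGraft (L ++ [q]) = igraft (ilistGraft L) q := by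
  induction L with
  | nil => simp [ilistGraft, igraft_leaf, leaf_igraft]
  | cons a L ih =>
    simp only [List.cons_append, ilistGraft, List.foldr_cons] at *
    rw [ih, igraft_assoc]

lemma indecItv_iff {p : PBT × PBT} (hp : isItv p) (hp1 : p.1 ≠ PBT.leaf) :
    IndecItv p ↔ PBT.Indec p.1 := by
  constructor
  · rintro ⟨-, -, hnd⟩
    refine ⟨hp1, ?_⟩
    rintro ⟨S, U, hS, hU, hE⟩
    have h : PBT.le (PBT.graftL S U) p.2 := by rw [hE]; exact hp
    obtain ⟨S', U', hp2, hS', hU', sS, sU⟩ := PBT.le_graft h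
    refine hnd ⟨(S, S'), (U, U'), hS', hU', hS, hU, ?_⟩
    simp only [igraft]
    exact Prod.ext hE hp2.symm
  · rintro ⟨hne, hnd⟩
    refine ⟨hp, hp1, ?_⟩
    rintro ⟨q, r, hq, hr, hq1, hr1, hE⟩
    exact hnd ⟨q.1, r.1, hq1, hr1, congrArg Prod.fst hE⟩

lemma size_ilistGraft_eq {L : List (PBT × PBT)} (h : ∀ q ∈ L, isItv q) :
    PBT.size (ilistGraft L).1 = PBT.size (ilistGraft L).2 := by
  induction L with
  | nil => rfl
  | cons a L ih =>
    simp only [ilistGraft, List.foldr_cons] at *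
    show PBT.size (PBT.graftL a.1 _) = PBT.size (PBT.graftL a.2 _)
    rw [PBT.size_graftL, PBT.size_graftL, PBT.le_size (h a (by simp)),
      ih (fun q hq => h q (by simp [hq]))]

lemma nonleaf_ilistGraft {L : List (PBT × PBT)} (h : ∀ q ∈ L, IndecItv q) (hne : L ≠ []) :
    (ilistGraft L).1 ≠ PBT.leaf := by
  cases L with
  | nil => exact absurd rfl hne
  | cons a L =>
    intro hleaf
    have h2 : PBT.size (PBT.graftL a.1 (ilistGraft L).1) = 0 := by
      rw [show PBT.graftL a.1 (ilistGraft L).1 = (ilistGraft (a :: L)).1 from rfl, hleaf]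
      rfl
    rw [PBT.size_graftL] at h2
    have := PBT.size_pos (h a (by simp)).2.1
    omega

lemma decomp_unique : ∀ (L M : List (PBT × PBT)), (∀ q ∈ L, IndecItv q) →
    (∀ q ∈ M, IndecItv q) → ilistGraft L = ilistGraft M → L = M := by
  intro L
  induction L using List.reverseRecOn with
  | nil =>
    intro M hL hM he
    cases M with
    | nil => rfl
    | cons a M' =>
      exact absurd (congrArg Prod.fst he.symm) (nonleaf_ilistGraft hM (by simp))
  | append_singleton L' q ih =>
    intro M hL hM he
    cases M using List.reverseRecOn with
    | nil =>
      exact absurd (congrArg Prod.fst he) (nonleaf_ilistGraft hL (by simp))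
    | append_singleton M' q' _ =>
      rw [ilistGraft_append, ilistGraft_append] at he
      have hq : IndecItv q := hL q (by simp)
      have hq' : IndecItv q' := hM q' (by simp)
      obtain ⟨r, hr⟩ := (PBT.indec_iff q.1).1 ((indecItv_iff hq.1 hq.2.1).1 hq)
      obtain ⟨r', hr'⟩ := (PBT.indec_iff q'.1).1 ((indecItv_iff hq'.1 hq'.2.1).1 hq')
      have hL' : ∀ x ∈ L', IndecItv x := fun x hx => hL x (by simp [hx])
      have hM' : ∀ x ∈ M', IndecItv x := fun x hx => hM x (by simp [hx])
      have he1 : PBT.graftL (ilistGraft L').1 q.1 = PBT.graftL (ilistGraft M').1 q'.1 :=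
        congrArg Prod.fst he
      have he2 : PBT.graftL (ilistGraft L').2 q.2 = PBT.graftL (ilistGraft M').2 q'.2 :=
        congrArg Prod.snd he
      rw [hr, hr'] at he1
      rw [show ∀ a : PBT, PBT.graftL a (PBT.node PBT.leaf r) = PBT.node a r from fun a => rfl,
        show ∀ a : PBT, PBT.graftL a (PBT.node PBT.leaf r') = PBT.node a r' from fun a => rfl]
        at he1
      injection he1 with hA1 hrr
      have hsz : PBT.size (ilistGraft L').2 = PBT.size (ilistGraft M').2 := by
        rw [← size_ilistGraft_eq (fun x hx => (hL' x hx).1),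
          ← size_ilistGraft_eq (fun x hx => (hM' x hx).1), hA1]
      obtain ⟨hA2, hq2⟩ := PBT.graft_inj q.2 q'.2 _ _ hsz he2
      have hqq : q = q' := Prod.ext (by rw [hr, hr', hrr]) hq2
      have hAA : ilistGraft L' = ilistGraft M' := Prod.ext hA1 hA2
      rw [ih M' hL' hM' hAA, hqq]

lemma decomp_exists : ∀ (n : ℕ) (p : PBT × PBT), PBT.size p.1 ≤ n → isItv p →
    p.1 ≠ PBT.leaf → ∃ L, (∀ q ∈ L, IndecItv q) ∧ ilistGraft L = p := by
  intro n
  induction n with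
  | zero =>
    intro p hn _ hp1
    exact absurd (PBT.eq_leaf_of_size (Nat.le_zero.1 hn)) hp1
  | succ n ih =>
    rintro ⟨S, T⟩ hn hp hp1
    simp only at hp1 hn
    match S, hp1 with
    | PBT.node Sl Sr, _ =>
    cases Sl with
    | leaf =>
      refine ⟨[(PBT.node PBT.leaf Sr, T)], ?_, ?_⟩
      · rintro q hq
        rw [List.mem_singleton] at hq
        subst hq
        exact (indecItv_iff hp (by simp)).2 (PBT.indec_node_leaf Sr)
      · show igraft _ (PBT.leaf, PBT.leaf) = _
        rw [igraft_leaf]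
    | node a b =>
      have hS : PBT.node (PBT.node a b) Sr
          = PBT.graftL (PBT.node a b) (PBT.node PBT.leaf Sr) := rfl
      have hle : PBT.le (PBT.graftL (PBT.node a b) (PBT.node PBT.leaf Sr)) T := by
        rw [← hS]; exact hp
      obtain ⟨T₁, T₂, rfl, h1, h2, s1, s2⟩ := PBT.le_graft hle
      have hsz : PBT.size (PBT.node a b) ≤ n := by
        simp [PBT.size] at hn ⊢
        omega
      obtain ⟨L₁, hL₁, hE₁⟩ := ih (PBT.node a b, T₁) hsz h1 (by simp)
      refine ⟨L₁ ++ [(PBT.node PBT.leaf Sr, T₂)], ?_, ?_⟩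
      · intro q hq
        rw [List.mem_append, List.mem_singleton] at hq
        rcases hq with hq | rfl
        · exact hL₁ q hq
        · exact (indecItv_iff (p := (PBT.node PBT.leaf Sr, T₂)) h2 (by simp)).2 (PBT.indec_node_leaf Sr)
      · rw [ilistGraft_append, hE₁]
        rfl

/-- Every Tamari interval admits a unique maximal decomposition
`I = I₁ / ⋯ / I_k` into indecomposable intervals; moreover an interval is
indecomposable if and only if its minimum is an indecomposable tree. -/
theorem interval_unique_maximal_decomposition (p : PBT × PBT)
    (hp : isItv p) (hp1 : p.1 ≠ PBT.leaf) :
    (∃! L : List (PBT × PBT), (∀ q ∈ L, IndecItv q) ∧ ilistGraft L = p) ∧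
    (IndecItv p ↔ PBT.Indec p.1) := by
  constructor
  · obtain ⟨L, hL, hE⟩ := decomp_exists (PBT.size p.1) p le_rfl hp hp1
    exact ⟨L, ⟨hL, hE⟩, fun M ⟨hM, hE'⟩ => decomp_unique M L hM hL (hE'.trans hE.symm)⟩
  · exact indecItv_iff hp hp1
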